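/- Let A be a real tensor of size n×n×n₃, invertible with inverse A⁻¹, let E be a tensor of size n×n×n₃, and suppose B = A+E (entrywise sum) is invertible with inverse B⁻¹. Then ‖A⁻¹−B⁻¹‖_F / ‖A⁻¹‖_F ≤ (‖A‖_F·‖B⁻¹‖₂)·‖E‖₂/‖A‖_F and ‖A⁻¹−B⁻¹‖₂ / ‖A⁻¹‖₂ ≤ (‖A‖₂·‖B⁻¹‖₂)·‖E‖₂/‖A‖₂. -/

import Mathlib

open scoped Matrix.Norms.L2Operator

noncomputable section

/-- The t-product of third-order tensors. -/
def tProd {n₁ n₂ n₃ n₄ : ℕ} [NeZero n₃] (A : Fin n₁ → Fin n₂ → ZMod n₃ → ℝ)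
    (B : Fin n₂ → Fin n₄ → ZMod n₃ → ℝ) : Fin n₁ → Fin n₄ → ZMod n₃ → ℝ :=
  fun i j k => ∑ l : Fin n₂, ∑ m : ZMod n₃, A i l (k - m) * B l j m

/-- The Frobenius norm of a third-order tensor. -/
def frobNorm {n₁ n₂ n₃ : ℕ} [NeZero n₃] (A : Fin n₁ → Fin n₂ → ZMod n₃ → ℝ) : ℝ :=
  Real.sqrt (∑ i : Fin n₁, ∑ j : Fin n₂, ∑ k : ZMod n₃, (A i j k) ^ 2)

/-- The block circulant matrix of a third-order tensor. -/
def bcirc {n₁ n₂ n₃ : ℕ} (A : Fin n₁ → Fin n₂ → ZMod n₃ → ℝ) :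
    Matrix (Fin n₁ × ZMod n₃) (Fin n₂ × ZMod n₃) ℝ :=
  fun p q => A p.1 q.1 (p.2 - q.2)

/-- The spectral norm of a third-order tensor: the L2 operator norm of its
block circulant matrix. -/
def specNorm {n₁ n₂ n₃ : ℕ} [NeZero n₃] (A : Fin n₁ → Fin n₂ → ZMod n₃ → ℝ) : ℝ :=
  ‖bcirc A‖

/-- The identity tensor. -/
def tId (n n₃ : ℕ) : Fin n → Fin n → ZMod n₃ → ℝ :=
  fun i j k => if i = j ∧ k = 0 then 1 else 0

/-- The tensor transpose. -/
def tTrans {n₁ n₂ n₃ : ℕ} (A : Fin n₁ → Fin n₂ → ZMod n₃ → ℝ) :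
    Fin n₂ → Fin n₁ → ZMod n₃ → ℝ :=
  fun i j k => A j i (-k)

/-- `X` is a Moore-Penrose inverse of `A`. -/
def IsMPInv {n₁ n₂ n₃ : ℕ} [NeZero n₃] (A : Fin n₁ → Fin n₂ → ZMod n₃ → ℝ)
    (X : Fin n₂ → Fin n₁ → ZMod n₃ → ℝ) : Prop :=
  tProd (tProd A X) A = A ∧ tProd (tProd X A) X = X ∧
    tTrans (tProd A X) = tProd A X ∧ tTrans (tProd X A) = tProd X A

/-- The `i`-th DFT block of a third-order tensor. -/
def dftBlock {n₁ n₂ n₃ : ℕ} [NeZero n₃] (A : Fin n₁ → Fin n₂ → ZMod n₃ → ℝ) (i : ZMod n₃) :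
    Matrix (Fin n₁) (Fin n₂) ℂ :=
  fun p q => ∑ k : ZMod n₃,
    Complex.exp (-2 * Real.pi * Complex.I * (i.val : ℂ) * (k.val : ℂ) / (n₃ : ℂ)) * (A p q k : ℂ)

end


section lemmas
variable {n₁ n₂ n₃ n₄ : ℕ} [NeZero n₃]

lemma bcirc_sub (A B : Fin n₁ → Fin n₂ → ZMod n₃ → ℝ) :
    bcirc (A - B) = bcirc A - bcirc B := rfl

lemma bcirc_tProd (A : Fin n₁ → Fin n₂ → ZMod n₃ → ℝ) (B : Fin n₂ → Fin n₄ → ZMod n₃ → ℝ) :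
    bcirc (tProd A B) = bcirc A * bcirc B := by
  ext ⟨i, k⟩ ⟨j, m⟩
  simp only [bcirc, tProd, Matrix.mul_apply, Fintype.sum_prod_type]
  refine Finset.sum_congr rfl fun l _ => ?_
  refine Fintype.sum_equiv (Equiv.addRight m) _ _ fun m' => ?_
  simp only [Equiv.coe_addRight]
  rw [add_sub_cancel_right, sub_sub, add_comm m m']

lemma bcirc_tId (n : ℕ) : bcirc (tId n n₃) = 1 := by
  ext ⟨i, k⟩ ⟨j, m⟩
  simp only [bcirc, tId, Matrix.one_apply, Prod.mk.injEq, sub_eq_zero]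

lemma frobNorm_nonneg (A : Fin n₁ → Fin n₂ → ZMod n₃ → ℝ) : 0 ≤ frobNorm A :=
  Real.sqrt_nonneg _

lemma frobNorm_pos {A : Fin n₁ → Fin n₂ → ZMod n₃ → ℝ} (h : A ≠ 0) : 0 < frobNorm A := by
  obtain ⟨i, hi⟩ := Function.ne_iff.mp h
  obtain ⟨j, hj⟩ := Function.ne_iff.mp hi
  obtain ⟨k, hk⟩ := Function.ne_iff.mp hj
  have h1 : A i j k ^ 2 ≤ ∑ k' : ZMod n₃, A i j k' ^ 2 :=
    Finset.single_le_sum (f := fun k' => A i j k' ^ 2)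
      (fun _ _ => sq_nonneg _) (Finset.mem_univ k)
  have h2 : ∑ k' : ZMod n₃, A i j k' ^ 2 ≤ ∑ j' : Fin n₂, ∑ k' : ZMod n₃, A i j' k' ^ 2 :=
    Finset.single_le_sum (f := fun j' => ∑ k' : ZMod n₃, A i j' k' ^ 2)
      (fun _ _ => Finset.sum_nonneg fun _ _ => sq_nonneg _) (Finset.mem_univ j)
  have h3 : ∑ j' : Fin n₂, ∑ k' : ZMod n₃, A i j' k' ^ 2 ≤
      ∑ i' : Fin n₁, ∑ j' : Fin n₂, ∑ k' : ZMod n₃, A i' j' k' ^ 2 :=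
    Finset.single_le_sum (f := fun i' => ∑ j' : Fin n₂, ∑ k' : ZMod n₃, A i' j' k' ^ 2)
      (fun _ _ => Finset.sum_nonneg fun _ _ => Finset.sum_nonneg fun _ _ => sq_nonneg _)
      (Finset.mem_univ i)
  have hpos : 0 < A i j k ^ 2 := (sq_nonneg _).lt_of_ne' (pow_ne_zero 2 hk)
  exact Real.sqrt_pos.mpr (lt_of_lt_of_le hpos (h1.trans (h2.trans h3)))

lemma bcirc_eq_zero {A : Fin n₁ → Fin n₂ → ZMod n₃ → ℝ} (h : bcirc A = 0) : A = 0 := by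
  funext i j k
  have := congrFun (congrFun h (i, k)) (j, 0)
  simpa [bcirc] using this

/-- key Frobenius-norm bound via columns -/
lemma frob_col_bound {n n₃ : ℕ} [NeZero n₃]
    (M : Matrix (Fin n × ZMod n₃) (Fin n × ZMod n₃) ℝ)
    (T S : Fin n → Fin n → ZMod n₃ → ℝ)
    (h : ∀ i j k, T i j k = ∑ p : Fin n × ZMod n₃, M (i, k) p * S p.1 j p.2) :
    frobNorm T ≤ ‖M‖ * frobNorm S := by
  set x : Fin n → EuclideanSpace ℝ (Fin n × ZMod n₃) := fun j => WithLp.toLp 2 (fun p : Fin n × ZMod n₃ => S p.1 j p.2) with hx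
  have hcol : ∀ j, (fun p : Fin n × ZMod n₃ => T p.1 j p.2) = M.mulVec (x j) := by
    intro j
    funext p
    rw [h p.1 j p.2]
    simp [Matrix.mulVec, dotProduct, hx]
  have normsq : ∀ (y : EuclideanSpace ℝ (Fin n × ZMod n₃)),
      ∑ p : Fin n × ZMod n₃, y p ^ 2 = ‖y‖ ^ 2 := by
    intro y
    rw [EuclideanSpace.norm_eq, Real.sq_sqrt (by positivity)]
    simp [Real.norm_eq_abs, sq_abs]
  have keyT : ∑ i, ∑ j, ∑ k, T i j k ^ 2 =
      ∑ j, ‖((EuclideanSpace.equiv (Fin n × ZMod n₃) ℝ).symm (M.mulVec (x j)) :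
        EuclideanSpace ℝ (Fin n × ZMod n₃))‖ ^ 2 := by
    rw [Finset.sum_comm]
    refine Finset.sum_congr rfl fun j _ => ?_
    rw [← normsq, Fintype.sum_prod_type]
    refine Finset.sum_congr rfl fun i _ => Finset.sum_congr rfl fun k _ => ?_
    exact congrArg (· ^ 2) (congrFun (hcol j) (i, k))
  have keyS : ∑ i, ∑ j, ∑ k, S i j k ^ 2 = ∑ j, ‖x j‖ ^ 2 := by
    rw [Finset.sum_comm]
    refine Finset.sum_congr rfl fun j _ => ?_
    rw [← normsq (x j), Fintype.sum_prod_type]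
  have hle : ∑ i, ∑ j, ∑ k, T i j k ^ 2 ≤ ‖M‖ ^ 2 * ∑ i, ∑ j, ∑ k, S i j k ^ 2 := by
    rw [keyT, keyS, Finset.mul_sum]
    refine Finset.sum_le_sum fun j _ => ?_
    have h1 := M.l2_opNorm_mulVec (x j)
    calc ‖((EuclideanSpace.equiv (Fin n × ZMod n₃) ℝ).symm (M.mulVec (x j)) :
          EuclideanSpace ℝ (Fin n × ZMod n₃))‖ ^ 2 ≤ (‖M‖ * ‖x j‖) ^ 2 := by
          apply pow_le_pow_left₀ (norm_nonneg _) h1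
      _ = ‖M‖ ^ 2 * ‖x j‖ ^ 2 := by ring
  calc frobNorm T = Real.sqrt (∑ i, ∑ j, ∑ k, T i j k ^ 2) := rfl
    _ ≤ Real.sqrt (‖M‖ ^ 2 * ∑ i, ∑ j, ∑ k, S i j k ^ 2) := Real.sqrt_le_sqrt hle
    _ = ‖M‖ * frobNorm S := by
        rw [Real.sqrt_mul (sq_nonneg _), Real.sqrt_sq (norm_nonneg _)]; rfl

end lemmas

theorem inverse_perturbation_bound (n n₃ : ℕ) [NeZero n₃] (hn : 0 < n)
    (A Ainv E Binv : Fin n → Fin n → ZMod n₃ → ℝ)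
    (hA₁ : tProd A Ainv = tId n n₃) (hA₂ : tProd Ainv A = tId n n₃)
    (hB₁ : tProd (A + E) Binv = tId n n₃) (hB₂ : tProd Binv (A + E) = tId n n₃) :
    frobNorm (Ainv - Binv) / frobNorm Ainv ≤
        (frobNorm A * specNorm Binv) * (specNorm E / frobNorm A) ∧
      specNorm (Ainv - Binv) / specNorm Ainv ≤
        (specNorm A * specNorm Binv) * (specNorm E / specNorm A) := by
  -- matrices
  set MA := bcirc A
  set ME := bcirc E
  set MAinv := bcirc Ainv
  set MBinv := bcirc Binv
  have hMA₁ : MA * MAinv = 1 := by rw [← bcirc_tProd, hA₁, bcirc_tId]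
  have hMA₂ : MAinv * MA = 1 := by rw [← bcirc_tProd, hA₂, bcirc_tId]
  have hbAE : bcirc (A + E) = MA + ME := rfl
  have hMB₂ : MBinv * (MA + ME) = 1 := by rw [← hbAE, ← bcirc_tProd, hB₂, bcirc_tId]
  -- key identity
  have key : MAinv - MBinv = (MBinv * ME) * MAinv := by
    have : (MBinv * ME) * MAinv
        = MBinv * (MA + ME) * MAinv - MBinv * (MA * MAinv) := by noncomm_ring
    rw [this, hMB₂, hMA₁, one_mul, mul_one]
  -- nonzero facts
  have hIdne : tId n n₃ ≠ 0 := by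
    intro h
    have := congrFun (congrFun (congrFun h ⟨0, hn⟩) ⟨0, hn⟩) 0
    simp [tId] at this
  have hAne : A ≠ 0 := by
    intro h
    apply hIdne
    rw [← hA₁, h]
    funext i j k
    simp [tProd]
  have hAinvne : Ainv ≠ 0 := by
    intro h
    apply hIdne
    rw [← hA₂, h]
    funext i j k
    simp [tProd]
  have hfA : 0 < frobNorm A := frobNorm_pos hAne
  have hfAinv : 0 < frobNorm Ainv := frobNorm_pos hAinvne
  have hsA : 0 < specNorm A := by
    rw [specNorm]
    rw [norm_pos_iff]
    intro h
    exact hAne (bcirc_eq_zero h)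
  have hsAinv : 0 < specNorm Ainv := by
    rw [specNorm, norm_pos_iff]
    intro h
    exact hAinvne (bcirc_eq_zero h)
  -- the core norm bounds
  have hMle : ‖MBinv * ME‖ ≤ specNorm Binv * specNorm E := Matrix.l2_opNorm_mul _ _
  have hfrob : frobNorm (Ainv - Binv) ≤ ‖MBinv * ME‖ * frobNorm Ainv := by
    apply frob_col_bound
    intro i j k
    have h1 := congrFun (congrFun (key.symm) (i, k)) (j, 0)
    have h2 : (MAinv - MBinv) (i, k) (j, 0) = (Ainv - Binv) i j k := by
      simp [MAinv, MBinv, bcirc]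
    rw [h2] at h1
    rw [← h1, Matrix.mul_apply]
    refine Finset.sum_congr rfl fun p _ => ?_
    simp [MAinv, bcirc]
  have hspec : specNorm (Ainv - Binv) ≤ (specNorm Binv * specNorm E) * specNorm Ainv := by
    have h1 : specNorm (Ainv - Binv) = ‖(MBinv * ME) * MAinv‖ := by
      rw [specNorm, bcirc_sub, key]
    rw [h1]
    calc ‖(MBinv * ME) * MAinv‖ ≤ ‖MBinv * ME‖ * ‖MAinv‖ := Matrix.l2_opNorm_mul _ _
      _ ≤ (specNorm Binv * specNorm E) * specNorm Ainv :=
        mul_le_mul_of_nonneg_right hMle (norm_nonneg _)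
  constructor
  · rw [div_le_iff₀ hfAinv]
    have hr : (frobNorm A * specNorm Binv) * (specNorm E / frobNorm A)
        = specNorm Binv * specNorm E := by
      field_simp
    rw [hr]
    calc frobNorm (Ainv - Binv) ≤ ‖MBinv * ME‖ * frobNorm Ainv := hfrob
      _ ≤ (specNorm Binv * specNorm E) * frobNorm Ainv :=
        mul_le_mul_of_nonneg_right hMle hfAinv.le
  · rw [div_le_iff₀ hsAinv]
    have hr : (specNorm A * specNorm Binv) * (specNorm E / specNorm A)
        = specNorm Binv * specNorm E := by
      field_simp
    rw [hr]
    exact hspec
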